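/- arXiv:1811.10023 — 2 statements merged into one kernel-verified Lean document; each statement's English description precedes it below -/
import Mathlib

section
/- For every β ∈ (0,1), the derivative of ẽ(β) = K₁(β)/K₂(β) + 3/β is strictly negative. -/
open MeasureTheory Real Set

noncomputable def K0 (β : ℝ) : ℝ :=
  ∫ y in Set.Ioi (0:ℝ), (1 / Real.sqrt (1 + y^2)) * Real.exp (-β * Real.sqrt (1 + y^2))

noncomputable def K1 (β : ℝ) : ℝ :=
  ∫ y in Set.Ioi (0:ℝ), Real.exp (-β * Real.sqrt (1 + y^2))

noncomputable def K2 (β : ℝ) : ℝ :=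
  ∫ y in Set.Ioi (0:ℝ), ((2*y^2 + 1) / Real.sqrt (1 + y^2)) * Real.exp (-β * Real.sqrt (1 + y^2))

noncomputable def Mfun (β : ℝ) : ℝ :=
  ∫ q : EuclideanSpace ℝ (Fin 3), Real.exp (-β * Real.sqrt (1 + ‖q‖^2))

open Filter Topology

-- basic sqrt facts
lemma sq1 (y : ℝ) : 0 < Real.sqrt (1 + y^2) := by positivity
lemma sq2 (y : ℝ) : Real.sqrt (1 + y^2) ^ 2 = 1 + y^2 := Real.sq_sqrt (by positivity)
lemma sq3 {y : ℝ} (hy : 0 ≤ y) : Real.sqrt (1 + y^2) ≤ 1 + y := by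
  rw [show (1:ℝ) + y = Real.sqrt ((1+y)^2) by rw [Real.sqrt_sq (by linarith)]]
  apply Real.sqrt_le_sqrt; nlinarith
lemma sq4 {y : ℝ} (hy : 0 ≤ y) : y ≤ Real.sqrt (1 + y^2) := by
  nlinarith [Real.sq_sqrt (show (0:ℝ) ≤ 1+y^2 by positivity), Real.sqrt_nonneg (1+y^2), sq_nonneg (Real.sqrt (1+y^2) - y)]

lemma int_pow_exp (n : ℕ) {b : ℝ} (hb : 0 < b) :
    IntegrableOn (fun y : ℝ => (1+y)^n * Real.exp (-b*y)) (Ioi 0) := by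
  have base : ∀ k : ℕ, IntegrableOn (fun y : ℝ => y^k * Real.exp (-b*y)) (Ioi 0) := by
    intro k
    have := integrableOn_rpow_mul_exp_neg_mul_rpow (p := 1) (s := (k:ℝ)) (b := b)
      (by exact_mod_cast neg_one_lt_zero.trans_le (Nat.cast_nonneg k)) zero_lt_one hb
    refine this.congr_fun (fun x hx => ?_) measurableSet_Ioi
    simp only [Real.rpow_natCast, Real.rpow_one]
  have : IntegrableOn (fun y : ℝ => ∑ k ∈ Finset.range (n+1),
      (n.choose k : ℝ) * (y^k * Real.exp (-b*y))) (Ioi 0) := by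
    apply integrable_finset_sum
    intro k _
    exact (base k).const_mul _
  refine this.congr_fun (fun x hx => ?_) measurableSet_Ioi
  rw [add_comm (1:ℝ) x, add_pow]
  rw [Finset.sum_mul]
  apply Finset.sum_congr rfl
  intro k _
  simp
  ring

lemma meas_exp (b : ℝ) :
    AEStronglyMeasurable (fun y : ℝ => Real.exp (-b * Real.sqrt (1+y^2)))
      (volume.restrict (Ioi 0)) := by
  apply Continuous.aestronglyMeasurable
  have : Continuous fun y : ℝ => -b * Real.sqrt (1+y^2) :=
    continuous_const.mul ((continuous_const.add (continuous_pow 2)).sqrt)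
  exact Real.continuous_exp.comp this

lemma int_master {g : ℝ → ℝ} (hg : AEStronglyMeasurable g (volume.restrict (Ioi 0)))
    {c : ℝ} (hc : 0 ≤ c) {n : ℕ} (hbound : ∀ y ∈ Ioi (0:ℝ), |g y| ≤ c * (1+y)^n)
    {b : ℝ} (hb : 0 < b) :
    IntegrableOn (fun y => g y * Real.exp (-b * Real.sqrt (1+y^2))) (Ioi 0) := by
  have hint : IntegrableOn (fun y : ℝ => c * ((1+y)^n * Real.exp (-b*y))) (Ioi 0) :=
    (int_pow_exp n hb).const_mul c
  apply Integrable.mono' hint (hg.mul (meas_exp b))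
  filter_upwards [ae_restrict_mem measurableSet_Ioi] with y hy
  have hy0 : (0:ℝ) ≤ y := le_of_lt hy
  have h1 : Real.exp (-b * Real.sqrt (1+y^2)) ≤ Real.exp (-b*y) := by
    apply Real.exp_le_exp.mpr
    have := sq4 hy0
    nlinarith
  rw [show (g * fun y => Real.exp (-b * Real.sqrt (1+y^2))) y
      = g y * Real.exp (-b * Real.sqrt (1+y^2)) from rfl]
  rw [norm_mul, Real.norm_eq_abs, Real.norm_eq_abs, abs_of_pos (Real.exp_pos _), ← mul_assoc]
  apply mul_le_mul (hbound y hy) h1 (le_of_lt (Real.exp_pos _))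
  positivity

lemma hasDerivAt_master {g : ℝ → ℝ} (hg : AEStronglyMeasurable g (volume.restrict (Ioi 0)))
    {c : ℝ} (hc : 0 ≤ c) {n : ℕ} (hbound : ∀ y ∈ Ioi (0:ℝ), |g y| ≤ c * (1+y)^n)
    {β : ℝ} (hβ : 0 < β) :
    HasDerivAt (fun b => ∫ y in Ioi (0:ℝ), g y * Real.exp (-b * Real.sqrt (1+y^2)))
      (∫ y in Ioi (0:ℝ), (-Real.sqrt (1+y^2) * g y) * Real.exp (-β * Real.sqrt (1+y^2))) β := by
  have hg' : AEStronglyMeasurable (fun y => -Real.sqrt (1+y^2) * g y) (volume.restrict (Ioi 0)) :=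
    (((continuous_const.add (continuous_pow 2)).sqrt.neg).aestronglyMeasurable).mul hg
  have hbound' : ∀ y ∈ Ioi (0:ℝ), |(-Real.sqrt (1+y^2)) * g y| ≤ c * (1+y)^(n+1) := by
    intro y hy
    have hy0 : (0:ℝ) ≤ y := le_of_lt hy
    rw [abs_mul, abs_neg, abs_of_pos (sq1 y)]
    calc Real.sqrt (1+y^2) * |g y| ≤ (1+y) * (c * (1+y)^n) :=
          mul_le_mul (sq3 hy0) (hbound y hy) (abs_nonneg _) (by linarith)
      _ = c * (1+y)^(n+1) := by ring
  refine (hasDerivAt_integral_of_dominated_loc_of_deriv_le (μ := volume.restrict (Ioi 0))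
    (F := fun b y => g y * Real.exp (-b * Real.sqrt (1+y^2)))
    (F' := fun b y => (-Real.sqrt (1+y^2) * g y) * Real.exp (-b * Real.sqrt (1+y^2)))
    (x₀ := β) (s := Metric.ball β (β/2)) (bound := fun y => c * ((1+y)^(n+1) * Real.exp (-(β/2)*y)))
    (Metric.ball_mem_nhds β (half_pos hβ))
    (Eventually.of_forall fun x => hg.mul (meas_exp x))
    (int_master hg hc hbound hβ)
    (hg'.mul (meas_exp β))
    ?_ ((int_pow_exp (n+1) (half_pos hβ)).const_mul c) ?_).2
  · filter_upwards [ae_restrict_mem measurableSet_Ioi] with y hy x hx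
    have hy0 : (0:ℝ) ≤ y := le_of_lt hy
    have hx2 : β/2 < x := by
      have := abs_lt.mp (mem_ball_iff_norm.mp hx)
      linarith [this.1]
    have h1 : Real.exp (-x * Real.sqrt (1+y^2)) ≤ Real.exp (-(β/2)*y) := by
      apply Real.exp_le_exp.mpr
      have h4 := sq4 hy0
      nlinarith [sq1 y]
    rw [norm_mul, Real.norm_eq_abs, Real.norm_eq_abs, abs_of_pos (Real.exp_pos _), ← mul_assoc]
    apply mul_le_mul (hbound' y hy) h1 (le_of_lt (Real.exp_pos _))
    positivity
  · filter_upwards [] with y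
    intro x _
    have h1 : HasDerivAt (fun b : ℝ => -b * Real.sqrt (1+y^2)) (-Real.sqrt (1+y^2)) x := by
      simpa using ((hasDerivAt_id x).neg.mul_const (Real.sqrt (1+y^2)))
    have h2 := (h1.exp).const_mul (g y)
    refine h2.congr_deriv ?_
    ring

lemma hasDerivAt_sqrt1 (y : ℝ) :
    HasDerivAt (fun y : ℝ => Real.sqrt (1+y^2)) (y / Real.sqrt (1+y^2)) y := by
  have h := (Real.hasDerivAt_sqrt (show (1+y^2) ≠ 0 by positivity)).comp y
    ((hasDerivAt_pow 2 y).const_add 1)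
  refine h.congr_deriv ?_
  have := sq1 y
  field_simp
  ring

lemma hasDerivAt_E (b y : ℝ) :
    HasDerivAt (fun y : ℝ => Real.exp (-b * Real.sqrt (1+y^2)))
      (Real.exp (-b * Real.sqrt (1+y^2)) * (-b * (y / Real.sqrt (1+y^2)))) y :=
  ((hasDerivAt_sqrt1 y).const_mul (-b)).exp

lemma tendsto_poly_exp {b : ℝ} (hb : 0 < b) :
    Tendsto (fun y : ℝ => (1+y)^2 * Real.exp (-b*y)) atTop (𝓝 0) := by
  have h1 : Tendsto (fun y : ℝ => b*(1+y)) atTop atTop := by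
    apply Tendsto.const_mul_atTop hb
    exact tendsto_atTop_add_const_left _ 1 tendsto_id
  have h2 := (tendsto_pow_mul_exp_neg_atTop_nhds_zero 2).comp h1
  have h3 := h2.const_mul (Real.exp b / b^2)
  rw [mul_zero] at h3
  refine h3.congr (fun y => ?_)
  simp only [Function.comp_apply]
  rw [show -(b*(1+y)) = -b*y + -b by ring, Real.exp_add]
  have hb2 : b^2 ≠ 0 := by positivity
  have he : Real.exp b * Real.exp (-b) = 1 := by
    rw [← Real.exp_add]; simp
  field_simp
  linear_combination (1+y)^2 * he

lemma cont_sqrt : Continuous (fun y : ℝ => Real.sqrt (1+y^2)) :=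
  (continuous_const.add (continuous_pow 2)).sqrt

lemma int_E {b : ℝ} (hb : 0 < b) :
    IntegrableOn (fun y : ℝ => Real.exp (-b * Real.sqrt (1+y^2))) (Ioi 0) := by
  have := int_master (g := fun _ : ℝ => 1) (c := 1) (n := 0) aestronglyMeasurable_const
    zero_le_one (fun y _ => by simp) hb
  exact this.congr_fun (fun y _ => by simp) measurableSet_Ioi

lemma int_qE {b : ℝ} (hb : 0 < b) :
    IntegrableOn (fun y : ℝ => (y^2 / Real.sqrt (1+y^2)) * Real.exp (-b * Real.sqrt (1+y^2)))
      (Ioi 0) := by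
  refine int_master (c := 1) (n := 2) ?_ zero_le_one ?_ hb
  · exact ((continuous_pow 2).div cont_sqrt fun y => (sq1 y).ne').aestronglyMeasurable
  · intro y hy
    have h1 : (1:ℝ) ≤ Real.sqrt (1+y^2) := by
      nlinarith [sq2 y, sq1 y, sq_nonneg y]
    rw [abs_of_nonneg (by positivity)]
    have : y^2 / Real.sqrt (1+y^2) ≤ y^2 := by
      apply div_le_self (by positivity) h1
    nlinarith [this, sq_nonneg y, le_of_lt (show (0:ℝ) < y from hy)]

lemma int_g2E {b : ℝ} (hb : 0 < b) :
    IntegrableOn (fun y : ℝ =>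
      ((2*y^2+1) / Real.sqrt (1+y^2)) * Real.exp (-b * Real.sqrt (1+y^2))) (Ioi 0) := by
  refine int_master (c := 3) (n := 2) ?_ (by norm_num) ?_ hb
  · exact (((continuous_const.mul (continuous_pow 2)).add continuous_const).div cont_sqrt
      fun y => (sq1 y).ne').aestronglyMeasurable
  · intro y hy
    have h1 : (1:ℝ) ≤ Real.sqrt (1+y^2) := by
      nlinarith [sq2 y, sq1 y, sq_nonneg y]
    rw [abs_of_nonneg (by positivity)]
    have : (2*y^2+1) / Real.sqrt (1+y^2) ≤ 2*y^2+1 := by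
      apply div_le_self (by positivity) h1
    nlinarith [this, le_of_lt (show (0:ℝ) < y from hy)]

lemma int_sqE {b : ℝ} (hb : 0 < b) :
    IntegrableOn (fun y : ℝ => y^2 * Real.exp (-b * Real.sqrt (1+y^2))) (Ioi 0) := by
  refine int_master (c := 1) (n := 2) (continuous_pow 2).aestronglyMeasurable zero_le_one ?_ hb
  intro y hy
  rw [abs_of_nonneg (by positivity)]
  nlinarith [le_of_lt (show (0:ℝ) < y from hy)]

lemma int_g2E' {b : ℝ} (hb : 0 < b) :
    IntegrableOn (fun y : ℝ => (2*y^2+1) * Real.exp (-b * Real.sqrt (1+y^2))) (Ioi 0) := by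
  refine int_master (g := fun y => 2*y^2+1) (c := 3) (n := 2)
    ((continuous_const.mul (continuous_pow 2)).add continuous_const).aestronglyMeasurable
    (by norm_num) ?_ hb
  intro y hy
  rw [abs_of_nonneg (by positivity)]
  nlinarith [le_of_lt (show (0:ℝ) < y from hy)]

lemma parts1 {β : ℝ} (hβ : 0 < β) :
    (∫ y in Ioi (0:ℝ), Real.exp (-β * Real.sqrt (1+y^2)))
      = β * ∫ y in Ioi (0:ℝ), (y^2 / Real.sqrt (1+y^2)) * Real.exp (-β * Real.sqrt (1+y^2)) := by
  have hderiv : ∀ y ∈ Ici (0:ℝ), HasDerivAt (fun y => y * Real.exp (-β * Real.sqrt (1+y^2)))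
      (Real.exp (-β * Real.sqrt (1+y^2))
        - β * ((y^2 / Real.sqrt (1+y^2)) * Real.exp (-β * Real.sqrt (1+y^2)))) y := by
    intro y _
    have h := (hasDerivAt_id y).mul (hasDerivAt_E β y)
    refine h.congr_deriv ?_
    have hs := (sq1 y).ne'
    simp only [id, Pi.mul_apply]
    field_simp
    ring
  have hint : IntegrableOn (fun y : ℝ => Real.exp (-β * Real.sqrt (1+y^2))
      - β * ((y^2 / Real.sqrt (1+y^2)) * Real.exp (-β * Real.sqrt (1+y^2)))) (Ioi 0) :=
    (int_E hβ).sub ((int_qE hβ).const_mul β)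
  have htend : Tendsto (fun y : ℝ => y * Real.exp (-β * Real.sqrt (1+y^2))) atTop (𝓝 0) := by
    apply squeeze_zero' (g := fun y : ℝ => (1+y)^2 * Real.exp (-β*y))
    · filter_upwards [eventually_ge_atTop (0:ℝ)] with y hy
      positivity
    · filter_upwards [eventually_ge_atTop (0:ℝ)] with y hy
      have h1 : Real.exp (-β * Real.sqrt (1+y^2)) ≤ Real.exp (-β*y) := by
        apply Real.exp_le_exp.mpr
        nlinarith [sq4 hy]
      apply mul_le_mul (by nlinarith) h1 (Real.exp_pos _).le (by positivity)
    · exact tendsto_poly_exp hβ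
  have key := integral_Ioi_of_hasDerivAt_of_tendsto' hderiv hint htend
  simp only [zero_mul, sub_zero] at key
  rw [integral_sub (int_E hβ) ((int_qE hβ).const_mul β), integral_const_mul] at key
  linarith [key]

lemma parts2 {β : ℝ} (hβ : 0 < β) :
    (∫ y in Ioi (0:ℝ), ((2*y^2+1) / Real.sqrt (1+y^2)) * Real.exp (-β * Real.sqrt (1+y^2)))
      = β * ∫ y in Ioi (0:ℝ), y^2 * Real.exp (-β * Real.sqrt (1+y^2)) := by
  have hderiv : ∀ y ∈ Ici (0:ℝ),
      HasDerivAt (fun y => (y * Real.sqrt (1+y^2)) * Real.exp (-β * Real.sqrt (1+y^2)))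
      (((2*y^2+1) / Real.sqrt (1+y^2)) * Real.exp (-β * Real.sqrt (1+y^2))
        - β * (y^2 * Real.exp (-β * Real.sqrt (1+y^2)))) y := by
    intro y _
    have h := ((hasDerivAt_id y).mul (hasDerivAt_sqrt1 y)).mul (hasDerivAt_E β y)
    refine h.congr_deriv ?_
    have hs := (sq1 y).ne'
    have hs2 := sq2 y
    simp only [id, Pi.mul_apply]
    field_simp
    linear_combination hs2
  have hint : IntegrableOn (fun y : ℝ =>
      ((2*y^2+1) / Real.sqrt (1+y^2)) * Real.exp (-β * Real.sqrt (1+y^2))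
        - β * (y^2 * Real.exp (-β * Real.sqrt (1+y^2)))) (Ioi 0) :=
    (int_g2E hβ).sub ((int_sqE hβ).const_mul β)
  have htend : Tendsto (fun y : ℝ => (y * Real.sqrt (1+y^2)) * Real.exp (-β * Real.sqrt (1+y^2)))
      atTop (𝓝 0) := by
    apply squeeze_zero' (g := fun y : ℝ => (1+y)^2 * Real.exp (-β*y))
    · filter_upwards [eventually_ge_atTop (0:ℝ)] with y hy
      positivity
    · filter_upwards [eventually_ge_atTop (0:ℝ)] with y hy
      have h1 : Real.exp (-β * Real.sqrt (1+y^2)) ≤ Real.exp (-β*y) := by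
        apply Real.exp_le_exp.mpr
        nlinarith [sq4 hy]
      have h2 : y * Real.sqrt (1+y^2) ≤ (1+y)^2 := by
        have := sq3 hy
        nlinarith [Real.sqrt_nonneg (1+y^2)]
      apply mul_le_mul h2 h1 (Real.exp_pos _).le (by positivity)
    · exact tendsto_poly_exp hβ
  have key := integral_Ioi_of_hasDerivAt_of_tendsto' hderiv hint htend
  simp only [zero_mul, sub_zero] at key
  rw [integral_sub (int_g2E hβ) ((int_sqE hβ).const_mul β), integral_const_mul] at key
  linarith [key]

theorem deriv_etilde_neg_on_Ioo (β : ℝ) (hβ : β ∈ Set.Ioo (0:ℝ) 1) :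
    deriv (fun b => K1 b / K2 b + 3 / b) β < 0 := by
  obtain ⟨hβ0, hβ1⟩ := hβ
  set A := ∫ y in Ioi (0:ℝ), (y^2 / Real.sqrt (1+y^2)) * Real.exp (-β * Real.sqrt (1+y^2))
    with hA
  set C := ∫ y in Ioi (0:ℝ), y^2 * Real.exp (-β * Real.sqrt (1+y^2)) with hC
  -- derivative of K1
  have hdK1 : HasDerivAt K1 (A - K2 β) β := by
    have hdK1' := hasDerivAt_master (g := fun _ => 1) (c := 1) (n := 0)
        aestronglyMeasurable_const zero_le_one (fun y _ => by simp) hβ0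
    have hK1fun : (fun b => ∫ y in Ioi (0:ℝ), (1:ℝ) * Real.exp (-b * Real.sqrt (1+y^2))) = K1 := by
      funext b; simp [K1]
    rw [hK1fun] at hdK1'
    have hval1 : (∫ y in Ioi (0:ℝ),
        (-Real.sqrt (1+y^2) * 1) * Real.exp (-β * Real.sqrt (1+y^2))) = A - K2 β := by
      rw [hA, K2, ← integral_sub (int_qE hβ0) (int_g2E hβ0)]
      apply setIntegral_congr_fun measurableSet_Ioi
      intro y hy
      have hs := (sq1 y).ne'
      have hs2 := sq2 y
      simp only [neg_mul]
      field_simp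
      linear_combination (-1) * hs2
    rwa [hval1] at hdK1'
  -- derivative of K2
  have hdK2 : HasDerivAt K2 (-(2*C + K1 β)) β := by
    have hmeas : AEStronglyMeasurable (fun y : ℝ => (2*y^2+1)/Real.sqrt (1+y^2))
        (volume.restrict (Ioi 0)) :=
      (((continuous_const.mul (continuous_pow 2)).add continuous_const).div cont_sqrt
        fun y => (sq1 y).ne').aestronglyMeasurable
    have hb : ∀ y ∈ Ioi (0:ℝ), |(2*y^2+1)/Real.sqrt (1+y^2)| ≤ 3 * (1+y)^2 := by
      intro y hy
      have h1 : (1:ℝ) ≤ Real.sqrt (1+y^2) := by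
        nlinarith [sq2 y, sq1 y, sq_nonneg y]
      rw [abs_of_nonneg (by positivity)]
      have : (2*y^2+1) / Real.sqrt (1+y^2) ≤ 2*y^2+1 := div_le_self (by positivity) h1
      nlinarith [this, le_of_lt (show (0:ℝ) < y from hy)]
    have hdK2' := hasDerivAt_master (g := fun y => (2*y^2+1)/Real.sqrt (1+y^2)) (c := 3)
        (n := 2) hmeas (by norm_num) hb hβ0
    have hK2fun : (fun b => ∫ y in Ioi (0:ℝ),
        ((2*y^2+1)/Real.sqrt (1+y^2)) * Real.exp (-b * Real.sqrt (1+y^2))) = K2 := by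
      funext b; rw [K2]
    rw [hK2fun] at hdK2'
    have hval2 : (∫ y in Ioi (0:ℝ), (-Real.sqrt (1+y^2) * ((2*y^2+1)/Real.sqrt (1+y^2)))
        * Real.exp (-β * Real.sqrt (1+y^2))) = -(2*C + K1 β) := by
      have step : (∫ y in Ioi (0:ℝ), (-Real.sqrt (1+y^2) * ((2*y^2+1)/Real.sqrt (1+y^2)))
          * Real.exp (-β * Real.sqrt (1+y^2)))
          = ∫ y in Ioi (0:ℝ), -(2 * (y^2 * Real.exp (-β * Real.sqrt (1+y^2)))
              + Real.exp (-β * Real.sqrt (1+y^2))) := by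
        apply setIntegral_congr_fun measurableSet_Ioi
        intro y hy
        have hs := (sq1 y).ne'
        simp only [neg_mul]
        field_simp
      rw [step, integral_neg, integral_add ((int_sqE hβ0).const_mul 2) (int_E hβ0),
        integral_const_mul]
      rw [hC, K1]
    rwa [hval2] at hdK2'
  -- identities
  have hI1 : K1 β = β * A := parts1 hβ0
  have hI2 : K2 β = β * C := parts2 hβ0
  -- positivity facts
  have hK2pos : 0 < K2 β := by
    rw [K2, setIntegral_pos_iff_support_of_nonneg_ae
      (Eventually.of_forall fun y => by positivity) (int_g2E hβ0)]
    have hsub : Ioi (0:ℝ) ⊆ (Function.support fun y : ℝ =>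
        ((2*y^2+1)/Real.sqrt (1+y^2)) * Real.exp (-β * Real.sqrt (1+y^2))) ∩ Ioi 0 :=
      fun y hy => ⟨ne_of_gt (by positivity), hy⟩
    calc (0:ENNReal) < volume (Ioi (0:ℝ)) := by simp [Real.volume_Ioi]
      _ ≤ _ := measure_mono hsub
  have hK1nonneg : 0 ≤ K1 β :=
    setIntegral_nonneg measurableSet_Ioi fun y _ => (Real.exp_pos _).le
  have hle : K1 β ≤ K2 β := by
    rw [K1, K2]
    apply setIntegral_mono_on (hf := int_E hβ0) (hg := int_g2E hβ0) measurableSet_Ioi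
    intro y hy
    have h1 : (1:ℝ) ≤ (2*y^2+1) / Real.sqrt (1+y^2) := by
      rw [le_div_iff₀ (sq1 y)]
      nlinarith [sq2 y, sq1 y, sq_nonneg y]
    exact le_mul_of_one_le_left (Real.exp_pos _).le h1
  -- assemble the derivative
  have hd3 : HasDerivAt (fun b : ℝ => 3 / b) (-(3 / β^2)) β := by
    have h := (hasDerivAt_inv hβ0.ne').const_mul (3:ℝ)
    have hv : -(3/β^2) = 3 * -(β^2)⁻¹ := by field_simp
    rw [hv]
    simpa [div_eq_mul_inv] using h
  have hdiv := (hdK1.div hdK2 hK2pos.ne').add hd3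
  rw [show (fun b => K1 b / K2 b + 3 / b) = (K1 / K2 + fun b => 3 / b) from rfl, hdiv.deriv]
  -- the final inequality
  have hA' : A = K1 β / β := by rw [hI1, mul_div_cancel_left₀ _ hβ0.ne']
  have hC' : C = K2 β / β := by rw [hI2, mul_div_cancel_left₀ _ hβ0.ne']
  rw [hA', hC']
  set k1 := K1 β
  set k2 := K2 β
  have hlt : ((k1/β - k2)*k2 - k1*(-(2*(k2/β)+k1)))/k2^2 < 3/β^2 := by
    rw [div_lt_div_iff₀ (by positivity) (by positivity)]
    have e : ((k1/β - k2)*k2 - k1*(-(2*(k2/β)+k1))) * β^2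
        = β*(k1*k2) - β^2*k2^2 + 2*(β*(k1*k2)) + β^2*k1^2 := by
      field_simp
      ring
    rw [e]
    have h1 : β*(k1*k2) ≤ β*(k2*k2) :=
      mul_le_mul_of_nonneg_left (mul_le_mul_of_nonneg_right hle hK2pos.le) hβ0.le
    have h2 : β*(k2*k2) < 1*(k2*k2) := mul_lt_mul_of_pos_right hβ1 (mul_pos hK2pos hK2pos)
    have h3 : β^2*k1^2 ≤ β^2*k2^2 :=
      mul_le_mul_of_nonneg_left (pow_le_pow_left₀ hK1nonneg hle 2) (sq_nonneg β)
    nlinarith [h1, h2, h3]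
  linarith [hlt]
end

section
/- Let β₀ > 0, e₀ = K₁(β₀)/K₂(β₀) + 3/β₀, and J⁰(q) = e^{-β₀√(1+|q|²)}/M(β₀). Set c = -ẽ'(β₀) where ẽ(β) = K₁(β)/K₂(β) + 3/β. Then c > 0 and ∫_{ℝ³} (√(1+|q|²) - e₀)² J⁰(q) dq = c; equivalently, the function e₅(q) = c^{-1/2}(√(1+|q|²) - e₀)√(J⁰(q)) has unit L² norm on ℝ³. -/
open MeasureTheory Real Set Filter

noncomputable def uu (r : ℝ) : ℝ := Real.sqrt (1 + r^2)

lemma uu_pos (r : ℝ) : 0 < uu r := Real.sqrt_pos.2 (by positivity)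
lemma uu_sq (r : ℝ) : uu r ^ 2 = 1 + r^2 := Real.sq_sqrt (by positivity)
lemma one_le_uu (r : ℝ) : 1 ≤ uu r := by
  rw [show (1:ℝ) = Real.sqrt 1 by simp]
  exact Real.sqrt_le_sqrt (by nlinarith)
lemma le_uu (r : ℝ) : r ≤ uu r := by
  rcases le_or_gt r 0 with h | h
  · exact h.trans (uu_pos r).le
  · rw [show uu r = Real.sqrt (1 + r^2) from rfl, Real.le_sqrt h.le] <;> nlinarith
lemma uu_le (r : ℝ) (hr : 0 ≤ r) : uu r ≤ 1 + r := by
  rw [show (1:ℝ) + r = Real.sqrt ((1+r)^2) from (Real.sqrt_sq (by linarith)).symm]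
  exact Real.sqrt_le_sqrt (by nlinarith)
lemma continuous_uu : Continuous uu :=
  Real.continuous_sqrt.comp (continuous_const.add (continuous_pow 2))
lemma hasDerivAt_uu (r : ℝ) : HasDerivAt uu (r / uu r) r := by
  have h1 : HasDerivAt (fun x : ℝ => 1 + x^2) (2*r) r := by
    simpa using (hasDerivAt_pow 2 r).const_add 1
  have h2 := (Real.hasDerivAt_sqrt (x := 1 + r^2) (by positivity)).comp r h1
  refine h2.congr_deriv ?_; symm
  rw [show Real.sqrt (1+r^2) = uu r from rfl]
  field_simp

lemma exp_uu_le {β r : ℝ} (hβ : 0 < β) (hr : 0 ≤ r) :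
    Real.exp (-β * uu r) ≤ Real.exp (-β * r) :=
  Real.exp_le_exp.2 (by nlinarith [le_uu r])

lemma tendsto_pow_exp (k : ℕ) {β : ℝ} (hβ : 0 < β) :
    Tendsto (fun x : ℝ => x ^ k * Real.exp (-β * x)) atTop (nhds 0) := by
  have := tendsto_rpow_mul_exp_neg_mul_atTop_nhds_zero k β hβ
  simpa [Real.rpow_natCast] using this

lemma int_pow {β : ℝ} (hβ : 0 < β) (k : ℕ) :
    IntegrableOn (fun r : ℝ => r ^ k * Real.exp (-β * uu r)) (Ioi 0) := by
  apply integrable_of_isBigO_exp_neg (half_pos hβ)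
  · exact ((continuous_pow k).mul
      (Real.continuous_exp.comp (continuous_const.mul continuous_uu : Continuous fun r => -β * uu r))).continuousOn
  · apply Asymptotics.IsBigO.of_bound 1
    have h1 := (tendsto_pow_exp k (half_pos hβ)).eventually_le_const one_pos
    filter_upwards [h1, eventually_ge_atTop (0:ℝ)] with r h1 hr
    have e1 : Real.exp (-β * r) = Real.exp (-(β/2) * r) * Real.exp (-(β/2) * r) := by
      rw [← Real.exp_add]; ring_nf
    have h2 : r ^ k * Real.exp (-β * uu r) ≤ r ^ k * Real.exp (-β * r) :=
      mul_le_mul_of_nonneg_left (exp_uu_le hβ hr) (by positivity)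
    have h3 : r ^ k * Real.exp (-β * r) ≤ Real.exp (-(β/2) * r) := by
      rw [e1, ← mul_assoc]
      nlinarith [Real.exp_pos (-(β/2)*r), Real.exp_pos (-β*r), pow_nonneg hr k]
    rw [Real.norm_eq_abs, Real.norm_eq_abs, abs_of_nonneg (by positivity),
      abs_of_nonneg (Real.exp_pos _).le, one_mul]
    linarith

lemma cont_E (β : ℝ) : Continuous fun r : ℝ => Real.exp (-β * uu r) :=
  Real.continuous_exp.comp (continuous_const.mul continuous_uu)

lemma int_exp {β : ℝ} (hβ : 0 < β) :
    IntegrableOn (fun r : ℝ => Real.exp (-β * uu r)) (Ioi 0) := by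
  have := int_pow hβ 0
  simpa using this

lemma int_B {β : ℝ} (hβ : 0 < β) :
    IntegrableOn (fun r : ℝ => r^2 * uu r * Real.exp (-β * uu r)) (Ioi 0) := by
  apply Integrable.mono' ((int_pow hβ 2).add (int_pow hβ 3))
  · exact (((continuous_pow 2).mul continuous_uu).mul (cont_E β)).aestronglyMeasurable
  · filter_upwards [self_mem_ae_restrict measurableSet_Ioi] with r hr
    have hr0 : (0:ℝ) < r := hr
    have h1 := uu_le r hr0.le
    have h2 := Real.exp_pos (-β * uu r)
    simp only [Pi.add_apply]
    have h5 : (0:ℝ) ≤ r^2 * uu r * Real.exp (-β * uu r) := by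
      have := uu_pos r; positivity
    rw [Real.norm_eq_abs, abs_of_nonneg h5]
    nlinarith [mul_le_mul_of_nonneg_left h1 (mul_nonneg (pow_nonneg hr0.le 2) h2.le)]

lemma int_D {β : ℝ} (hβ : 0 < β) :
    IntegrableOn (fun r : ℝ => r^2 * (1 + r^2) * Real.exp (-β * uu r)) (Ioi 0) := by
  have h : IntegrableOn (fun r : ℝ => r^2 * Real.exp (-β * uu r) + r^4 * Real.exp (-β * uu r)) (Ioi 0) :=
    (int_pow hβ 2).add (int_pow hβ 4)
  apply h.congr_fun ?_ measurableSet_Ioi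
  intro r _; ring

lemma int_K2 {β : ℝ} (hβ : 0 < β) :
    IntegrableOn (fun r : ℝ => ((2*r^2 + 1) / uu r) * Real.exp (-β * uu r)) (Ioi 0) := by
  apply Integrable.mono' (((int_pow hβ 2).const_mul 2).add (int_exp hβ))
  · exact (((continuous_const.mul (continuous_pow 2)).add continuous_const).div
      continuous_uu (fun r => (uu_pos r).ne')).mul (cont_E β) |>.aestronglyMeasurable
  · filter_upwards [] with r
    have h2 := Real.exp_pos (-β * uu r)
    have h3 : (2*r^2+1) / uu r ≤ 2*r^2+1 := div_le_self (by positivity) (one_le_uu r)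
    have h4 : 0 ≤ (2*r^2+1) / uu r := div_nonneg (by positivity) (uu_pos r).le
    simp only [Pi.add_apply]
    rw [Real.norm_eq_abs, abs_of_nonneg (by positivity)]
    nlinarith

noncomputable def Af (β : ℝ) : ℝ := ∫ r in Ioi (0:ℝ), r^2 * Real.exp (-β * uu r)
noncomputable def Bf (β : ℝ) : ℝ := ∫ r in Ioi (0:ℝ), r^2 * uu r * Real.exp (-β * uu r)
noncomputable def Df (β : ℝ) : ℝ := ∫ r in Ioi (0:ℝ), r^2 * (1 + r^2) * Real.exp (-β * uu r)

lemma K1_def' (β : ℝ) : K1 β = ∫ r in Ioi (0:ℝ), Real.exp (-β * uu r) := rfl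
lemma K2_def' (β : ℝ) : K2 β = ∫ r in Ioi (0:ℝ), ((2*r^2+1) / uu r) * Real.exp (-β * uu r) := rfl

-- derivative of r * uu r * exp(-β uu r)
lemma hderiv_g1 {β : ℝ} (x : ℝ) :
    HasDerivAt (fun r => r * uu r * Real.exp (-β * uu r))
      (((2*x^2 + 1) / uu x) * Real.exp (-β * uu x) - β * (x^2 * Real.exp (-β * uu x))) x := by
  have h1 : HasDerivAt (fun r : ℝ => r * uu r) (1 * uu x + x * (x / uu x)) x :=
    (hasDerivAt_id x).mul (hasDerivAt_uu x)
  have h2 : HasDerivAt (fun r => Real.exp (-β * uu r))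
      (Real.exp (-β * uu x) * (-β * (x / uu x))) x :=
    (((hasDerivAt_uu x).const_mul (-β)).exp)
  have h := h1.mul h2
  refine h.congr_deriv ?_; symm
  have hu := uu_pos x
  have hsq := uu_sq x
  field_simp
  linear_combination (-1 : ℝ) * hsq

lemma hderiv_g2 {β : ℝ} (x : ℝ) :
    HasDerivAt (fun r => r * (1 + r^2) * Real.exp (-β * uu r))
      ((Real.exp (-β * uu x) + 3 * (x^2 * Real.exp (-β * uu x)))
        - β * (x^2 * uu x * Real.exp (-β * uu x))) x := by
  have h1 : HasDerivAt (fun r : ℝ => r * (1 + r^2)) (1 * (1 + x^2) + x * (2*x)) x :=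
    (hasDerivAt_id x).mul (by simpa using (hasDerivAt_pow 2 x).const_add 1)
  have h2 : HasDerivAt (fun r => Real.exp (-β * uu r))
      (Real.exp (-β * uu x) * (-β * (x / uu x))) x :=
    (((hasDerivAt_uu x).const_mul (-β)).exp)
  have h := h1.mul h2
  refine h.congr_deriv ?_; symm
  have hu := uu_pos x
  have hsq := uu_sq x
  field_simp
  linear_combination (-(β * x^2)) * hsq

lemma tendsto_g1 {β : ℝ} (hβ : 0 < β) :
    Tendsto (fun r => r * uu r * Real.exp (-β * uu r)) atTop (nhds 0) := by
  have hb : Tendsto (fun r : ℝ => r ^ 1 * Real.exp (-β * r) + r^2 * Real.exp (-β * r))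
      atTop (nhds 0) := by
    simpa using (tendsto_pow_exp 1 hβ).add (tendsto_pow_exp 2 hβ)
  apply squeeze_zero' (g := fun r : ℝ => r ^ 1 * Real.exp (-β * r) + r^2 * Real.exp (-β * r))
    ?_ ?_ hb
  · filter_upwards [eventually_ge_atTop (0:ℝ)] with r hr
    have := uu_pos r; positivity
  · filter_upwards [eventually_ge_atTop (0:ℝ)] with r hr
    have h1 := uu_le r hr
    have h2 := exp_uu_le hβ hr
    have h3 := Real.exp_pos (-β * uu r)
    have h4 : r * uu r * Real.exp (-β * uu r) ≤ r * (1 + r) * Real.exp (-β * r) := by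
      apply mul_le_mul (by nlinarith [uu_pos r]) h2 h3.le (by nlinarith)
    calc r * uu r * Real.exp (-β * uu r) ≤ r * (1 + r) * Real.exp (-β * r) := h4
      _ = r ^ 1 * Real.exp (-β * r) + r^2 * Real.exp (-β * r) := by ring

lemma tendsto_g2 {β : ℝ} (hβ : 0 < β) :
    Tendsto (fun r => r * (1 + r^2) * Real.exp (-β * uu r)) atTop (nhds 0) := by
  have hb : Tendsto (fun r : ℝ => r ^ 1 * Real.exp (-β * r) + r^3 * Real.exp (-β * r))
      atTop (nhds 0) := by
    simpa using (tendsto_pow_exp 1 hβ).add (tendsto_pow_exp 3 hβ)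
  apply squeeze_zero' (g := fun r : ℝ => r ^ 1 * Real.exp (-β * r) + r^3 * Real.exp (-β * r))
    ?_ ?_ hb
  · filter_upwards [eventually_ge_atTop (0:ℝ)] with r hr
    positivity
  · filter_upwards [eventually_ge_atTop (0:ℝ)] with r hr
    have h2 := exp_uu_le hβ hr
    have h3 := Real.exp_pos (-β * uu r)
    calc r * (1 + r^2) * Real.exp (-β * uu r) ≤ r * (1 + r^2) * Real.exp (-β * r) := by
          apply mul_le_mul_of_nonneg_left h2 (by nlinarith)
      _ = r ^ 1 * Real.exp (-β * r) + r^3 * Real.exp (-β * r) := by ring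

lemma K2_eq {β : ℝ} (hβ : 0 < β) : K2 β = β * Af β := by
  have key : (∫ r in Ioi (0:ℝ),
      (((2*r^2 + 1) / uu r) * Real.exp (-β * uu r) - β * (r^2 * Real.exp (-β * uu r)))) = 0 := by
    have h := integral_Ioi_of_hasDerivAt_of_tendsto (a := 0)
      (f := fun r => r * uu r * Real.exp (-β * uu r))
      (f' := fun r => ((2*r^2 + 1) / uu r) * Real.exp (-β * uu r)
          - β * (r^2 * Real.exp (-β * uu r)))
      (m := 0)
      ((((continuous_id.mul continuous_uu).mul (cont_E β)).continuousAt).continuousWithinAt)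
      (fun x _ => hderiv_g1 x)
      ((int_K2 hβ).sub ((int_pow hβ 2).const_mul β))
      (tendsto_g1 hβ)
    simpa using h
  have hsplit := integral_sub (int_K2 hβ) ((int_pow hβ 2).const_mul β)
  rw [hsplit] at key
  have : (∫ r in Ioi (0:ℝ), β * (r^2 * Real.exp (-β * uu r))) = β * Af β := by
    rw [integral_const_mul]; rfl
  rw [this] at key
  rw [K2_def']
  linarith

lemma K1_eq {β : ℝ} (hβ : 0 < β) : K1 β + 3 * Af β = β * Bf β := by
  have key : (∫ r in Ioi (0:ℝ),
      ((Real.exp (-β * uu r) + 3 * (r^2 * Real.exp (-β * uu r)))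
        - β * (r^2 * uu r * Real.exp (-β * uu r)))) = 0 := by
    have h := integral_Ioi_of_hasDerivAt_of_tendsto (a := 0)
      (f := fun r => r * (1 + r^2) * Real.exp (-β * uu r))
      (f' := fun r => (Real.exp (-β * uu r) + 3 * (r^2 * Real.exp (-β * uu r)))
          - β * (r^2 * uu r * Real.exp (-β * uu r)))
      (m := 0)
      (((continuous_id.mul (continuous_const.add (continuous_pow 2))).mul
        (cont_E β)).continuousAt.continuousWithinAt)
      (fun x _ => hderiv_g2 x)
      (((int_exp hβ).add ((int_pow hβ 2).const_mul 3)).sub ((int_B hβ).const_mul β))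
      (tendsto_g2 hβ)
    simpa using h
  have i1 : Integrable (fun r : ℝ => Real.exp (-β * uu r) + 3 * (r^2 * Real.exp (-β * uu r)))
      (volume.restrict (Ioi 0)) := (int_exp hβ).add ((int_pow hβ 2).const_mul 3)
  have i2 : Integrable (fun r : ℝ => β * (r^2 * uu r * Real.exp (-β * uu r)))
      (volume.restrict (Ioi 0)) := (int_B hβ).const_mul β
  have i3 : Integrable (fun r : ℝ => 3 * (r^2 * Real.exp (-β * uu r)))
      (volume.restrict (Ioi 0)) := (int_pow hβ 2).const_mul 3
  rw [integral_sub i1 i2, integral_add (int_exp hβ) i3,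
    integral_const_mul, integral_const_mul] at key
  rw [K1_def']
  have h1 : (∫ r in Ioi (0:ℝ), r^2 * Real.exp (-β * uu r)) = Af β := rfl
  have h2 : (∫ r in Ioi (0:ℝ), r^2 * uu r * Real.exp (-β * uu r)) = Bf β := rfl
  rw [h1, h2] at key
  linarith

lemma Af_pos {β : ℝ} (hβ : 0 < β) : 0 < Af β := by
  have hnn : 0 ≤ᵐ[volume.restrict (Ioi (0:ℝ))] fun r : ℝ => r^2 * Real.exp (-β * uu r) :=
    Filter.Eventually.of_forall fun r => by positivity
  rw [show Af β = ∫ r in Ioi (0:ℝ), r^2 * Real.exp (-β * uu r) from rfl,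
    setIntegral_pos_iff_support_of_nonneg_ae hnn (int_pow hβ 2)]
  have hsub : Ioi (0:ℝ) ⊆ Function.support (fun r : ℝ => r^2 * Real.exp (-β * uu r)) := by
    intro r hr
    have hr0 : (0:ℝ) < r := hr
    have he := Real.exp_pos (-β * uu r)
    exact ne_of_gt (by positivity)
  calc (0:ENNReal) < volume (Ioi (0:ℝ)) := by simp [Real.volume_Ioi]
    _ ≤ volume (Function.support (fun r : ℝ => r^2 * Real.exp (-β * uu r)) ∩ Ioi 0) :=
        measure_mono (subset_inter hsub subset_rfl)

lemma hasDerivAt_Af {β₀ : ℝ} (hβ₀ : 0 < β₀) : HasDerivAt Af (-(Bf β₀)) β₀ := by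
  have key := hasDerivAt_integral_of_dominated_loc_of_deriv_le
    (μ := volume.restrict (Ioi (0:ℝ))) (x₀ := β₀)
    (F := fun β r => r^2 * Real.exp (-β * uu r))
    (F' := fun β r => -(r^2 * uu r * Real.exp (-β * uu r)))
    (bound := fun r => r^2 * uu r * Real.exp (-(β₀/2) * uu r))
    (Metric.ball_mem_nhds β₀ (half_pos hβ₀))
    (Filter.Eventually.of_forall fun β =>
      ((continuous_pow 2).mul (cont_E β)).aestronglyMeasurable)
    (int_pow hβ₀ 2)
    ((((continuous_pow 2).mul continuous_uu).mul (cont_E β₀)).neg.aestronglyMeasurable)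
    (Filter.Eventually.of_forall fun r => fun β hβ => by
      have hβ' : β₀/2 < β := by
        rw [Metric.mem_ball, Real.dist_eq, abs_lt] at hβ; linarith
      have hu := uu_pos r
      have h1 : Real.exp (-β * uu r) ≤ Real.exp (-(β₀/2) * uu r) :=
        Real.exp_le_exp.2 (by nlinarith)
      rw [norm_neg, Real.norm_eq_abs, abs_of_nonneg (by positivity)]
      nlinarith [sq_nonneg r, mul_nonneg (sq_nonneg r) hu.le])
    (int_B (half_pos hβ₀))
    (Filter.Eventually.of_forall fun r => fun β _ => by
      have h := ((((hasDerivAt_id β).neg.mul_const (uu r)).exp).const_mul (r^2))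
      refine h.congr_deriv ?_; symm
      simp only [Pi.neg_apply, id_eq]
      ring)
  have h2 : (∫ r in Ioi (0:ℝ), -(r^2 * uu r * Real.exp (-β₀ * uu r))) = -(Bf β₀) := by
    rw [integral_neg]; rfl
  rw [h2] at key
  exact key.2

lemma hasDerivAt_Bf {β₀ : ℝ} (hβ₀ : 0 < β₀) : HasDerivAt Bf (-(Df β₀)) β₀ := by
  have key := hasDerivAt_integral_of_dominated_loc_of_deriv_le
    (μ := volume.restrict (Ioi (0:ℝ))) (x₀ := β₀)
    (F := fun β r => r^2 * uu r * Real.exp (-β * uu r))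
    (F' := fun β r => -(r^2 * (1 + r^2) * Real.exp (-β * uu r)))
    (bound := fun r => r^2 * (1 + r^2) * Real.exp (-(β₀/2) * uu r))
    (Metric.ball_mem_nhds β₀ (half_pos hβ₀))
    (Filter.Eventually.of_forall fun β =>
      (((continuous_pow 2).mul continuous_uu).mul (cont_E β)).aestronglyMeasurable)
    (int_B hβ₀)
    ((((continuous_pow 2).mul (continuous_const.add (continuous_pow 2))).mul
      (cont_E β₀)).neg.aestronglyMeasurable)
    (Filter.Eventually.of_forall fun r => fun β hβ => by
      have hβ' : β₀/2 < β := by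
        rw [Metric.mem_ball, Real.dist_eq, abs_lt] at hβ; linarith
      have hu := uu_pos r
      have h1 : Real.exp (-β * uu r) ≤ Real.exp (-(β₀/2) * uu r) :=
        Real.exp_le_exp.2 (by nlinarith)
      rw [norm_neg, Real.norm_eq_abs, abs_of_nonneg (by positivity)]
      nlinarith [sq_nonneg r, sq_nonneg (r*r), mul_nonneg (sq_nonneg r) (sq_nonneg r)])
    (int_D (half_pos hβ₀))
    (Filter.Eventually.of_forall fun r => fun β _ => by
      have h := ((((hasDerivAt_id β).neg.mul_const (uu r)).exp).const_mul (r^2 * uu r))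
      refine h.congr_deriv ?_; symm
      have hsq := uu_sq r
      simp only [Pi.neg_apply, id_eq, neg_mul]
      linear_combination (r^2 * Real.exp (-(β * uu r))) * hsq)
  have h2 : (∫ r in Ioi (0:ℝ), -(r^2 * (1 + r^2) * Real.exp (-β₀ * uu r))) = -(Df β₀) := by
    rw [integral_neg]; rfl
  rw [h2] at key
  exact key.2

lemma ratio_eq {β : ℝ} (hβ : 0 < β) : K1 β / K2 β + 3 / β = Bf β / Af β := by
  have hA := Af_pos hβ
  have hK2 := K2_eq hβ
  have hK1 : K1 β = β * Bf β - 3 * Af β := by linarith [K1_eq hβ]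
  rw [hK1, hK2]
  field_simp
  ring

lemma V_eq {β m : ℝ} (hβ : 0 < β) :
    (∫ r in Ioi (0:ℝ), r^2 * (uu r - m)^2 * Real.exp (-β * uu r))
      = Df β - 2*m*(Bf β) + m^2*(Af β) := by
  have hpt : ∀ r : ℝ, r^2 * (uu r - m)^2 * Real.exp (-β * uu r)
      = (r^2 * (1 + r^2) * Real.exp (-β * uu r)
          - (2*m) * (r^2 * uu r * Real.exp (-β * uu r)))
        + m^2 * (r^2 * Real.exp (-β * uu r)) := fun r => by
    linear_combination (r^2 * Real.exp (-β * uu r)) * uu_sq r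
  have i1 : Integrable (fun r : ℝ => r^2 * (1 + r^2) * Real.exp (-β * uu r)
      - (2*m) * (r^2 * uu r * Real.exp (-β * uu r))) (volume.restrict (Ioi 0)) :=
    (int_D hβ).sub ((int_B hβ).const_mul (2*m))
  have i2 : Integrable (fun r : ℝ => m^2 * (r^2 * Real.exp (-β * uu r)))
      (volume.restrict (Ioi 0)) := (int_pow hβ 2).const_mul (m^2)
  have i3 : Integrable (fun r : ℝ => (2*m) * (r^2 * uu r * Real.exp (-β * uu r)))
      (volume.restrict (Ioi 0)) := (int_B hβ).const_mul (2*m)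
  rw [integral_congr_ae (Filter.Eventually.of_forall fun r => hpt r),
    integral_add i1 i2, integral_sub (int_D hβ) i3,
    integral_const_mul, integral_const_mul]
  rfl

lemma int_V {β m : ℝ} (hβ : 0 < β) :
    IntegrableOn (fun r : ℝ => r^2 * (uu r - m)^2 * Real.exp (-β * uu r)) (Ioi 0) := by
  have h : IntegrableOn (fun r : ℝ => (r^2 * (1 + r^2) * Real.exp (-β * uu r)
          - (2*m) * (r^2 * uu r * Real.exp (-β * uu r)))
        + m^2 * (r^2 * Real.exp (-β * uu r))) (Ioi 0) :=
    ((int_D hβ).sub ((int_B hβ).const_mul (2*m))).add ((int_pow hβ 2).const_mul (m^2))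
  apply h.congr_fun ?_ measurableSet_Ioi
  intro r _
  linear_combination (-(r^2 * Real.exp (-β * uu r))) * uu_sq r

lemma V_pos {β m : ℝ} (hβ : 0 < β) :
    0 < ∫ r in Ioi (0:ℝ), r^2 * (uu r - m)^2 * Real.exp (-β * uu r) := by
  have hnn : 0 ≤ᵐ[volume.restrict (Ioi (0:ℝ))]
      fun r : ℝ => r^2 * (uu r - m)^2 * Real.exp (-β * uu r) :=
    Filter.Eventually.of_forall fun r => by positivity
  rw [setIntegral_pos_iff_support_of_nonneg_ae hnn (int_V hβ)]
  set S : Set ℝ := {r : ℝ | uu r = m} ∩ Ioi 0 with hS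
  have hSsub : S.Subsingleton := by
    rintro r ⟨hr1, hr2⟩ s ⟨hs1, hs2⟩
    have h1 : uu r ^ 2 = uu s ^ 2 := by rw [hr1.out, hs1.out]
    rw [uu_sq, uu_sq] at h1
    have hr0 : (0:ℝ) < r := hr2
    have hs0 : (0:ℝ) < s := hs2
    nlinarith
  have hnull : volume S = 0 := hSsub.measure_zero volume
  have hsub : Ioi (0:ℝ) \ S ⊆
      Function.support (fun r : ℝ => r^2 * (uu r - m)^2 * Real.exp (-β * uu r)) ∩ Ioi 0 := by
    rintro r ⟨hr1, hr2⟩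
    have hr0 : (0:ℝ) < r := hr1
    have hm : uu r ≠ m := fun h => hr2 ⟨h, hr1⟩
    have hne : uu r - m ≠ 0 := sub_ne_zero.2 hm
    refine ⟨?_, hr1⟩
    have he := Real.exp_pos (-β * uu r)
    exact ne_of_gt (by positivity)
  calc (0:ENNReal) < volume (Ioi (0:ℝ) \ S) := by
        rw [measure_diff_null hnull]; simp [Real.volume_Ioi]
    _ ≤ _ := measure_mono hsub

lemma polar (f : ℝ → ℝ) :
    (∫ q : EuclideanSpace ℝ (Fin 3), f ‖q‖)
      = (3 * (volume (Metric.ball (0 : EuclideanSpace ℝ (Fin 3)) 1)).toReal)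
        * ∫ r in Ioi (0:ℝ), r^2 * f r := by
  have h := integral_fun_norm_addHaar (volume : Measure (EuclideanSpace ℝ (Fin 3))) f
  rw [h]
  simp only [finrank_euclideanSpace_fin, smul_eq_mul, nsmul_eq_mul]
  norm_num [mul_assoc, measureReal_def]

theorem e5_unit_norm (β₀ : ℝ) (hβ₀ : 0 < β₀) :
    let e₀ : ℝ := K1 β₀ / K2 β₀ + 3 / β₀
    let c : ℝ := -(deriv (fun b => K1 b / K2 b + 3 / b) β₀)
    0 < c ∧
    (∫ q : EuclideanSpace ℝ (Fin 3),
        (Real.sqrt (1 + ‖q‖^2) - e₀)^2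
          * (Real.exp (-β₀ * Real.sqrt (1 + ‖q‖^2)) / Mfun β₀)) = c ∧
    (∫ q : EuclideanSpace ℝ (Fin 3),
        ((Real.sqrt c)⁻¹ * (Real.sqrt (1 + ‖q‖^2) - e₀)
          * Real.sqrt (Real.exp (-β₀ * Real.sqrt (1 + ‖q‖^2)) / Mfun β₀))^2) = 1 := by
  intro e₀ c
  have hA := Af_pos hβ₀
  have he₀ : e₀ = Bf β₀ / Af β₀ := ratio_eq hβ₀
  -- the value of c
  have hfe : (fun b => K1 b / K2 b + 3 / b) =ᶠ[nhds β₀] fun b => Bf b / Af b := by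
    filter_upwards [isOpen_Ioi.mem_nhds hβ₀] with b hb
    exact ratio_eq hb
  have hd : HasDerivAt (fun b => Bf b / Af b)
      ((-(Df β₀) * Af β₀ - Bf β₀ * -(Bf β₀)) / Af β₀ ^ 2) β₀ :=
    (hasDerivAt_Bf hβ₀).div (hasDerivAt_Af hβ₀) hA.ne'
  have hc : c = (Df β₀ * Af β₀ - Bf β₀ ^ 2) / Af β₀ ^ 2 := by
    show -(deriv (fun b => K1 b / K2 b + 3 / b) β₀) = _
    rw [hfe.deriv_eq, hd.deriv]
    field_simp
    ring
  -- the variance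
  set V : ℝ := ∫ r in Ioi (0:ℝ), r^2 * (uu r - e₀)^2 * Real.exp (-β₀ * uu r) with hVdef
  have hVpos : 0 < V := V_pos hβ₀
  have hV : V = Df β₀ - 2*e₀*(Bf β₀) + e₀^2*(Af β₀) := V_eq hβ₀
  have hcV : c = V / Af β₀ := by
    rw [hc, hV, he₀]
    field_simp
    ring
  have hcpos : 0 < c := by
    rw [hcV]; exact div_pos hVpos hA
  have hMC : Mfun β₀
      = (3 * (volume (Metric.ball (0 : EuclideanSpace ℝ (Fin 3)) 1)).toReal) * Af β₀ :=
    polar (fun y => Real.exp (-β₀ * Real.sqrt (1 + y^2)))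
  set C : ℝ := 3 * (volume (Metric.ball (0 : EuclideanSpace ℝ (Fin 3)) 1)).toReal with hCdef
  have hCpos : 0 < C := by
    have h1 : 0 < volume (Metric.ball (0 : EuclideanSpace ℝ (Fin 3)) 1) :=
      Metric.measure_ball_pos volume _ one_pos
    have h2 : volume (Metric.ball (0 : EuclideanSpace ℝ (Fin 3)) 1) ≠ ⊤ :=
      (measure_ball_lt_top).ne
    have := ENNReal.toReal_pos h1.ne' h2
    positivity
  have hM : 0 < Mfun β₀ := by rw [hMC]; positivity
  have hmain : (∫ q : EuclideanSpace ℝ (Fin 3),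
      (Real.sqrt (1 + ‖q‖^2) - e₀)^2
        * (Real.exp (-β₀ * Real.sqrt (1 + ‖q‖^2)) / Mfun β₀)) = c := by
    have hpol := polar (fun y => (Real.sqrt (1 + y^2) - e₀)^2
      * (Real.exp (-β₀ * Real.sqrt (1 + y^2)) / Mfun β₀))
    rw [hpol]
    have hsplit : (∫ r in Ioi (0:ℝ), r^2 * ((Real.sqrt (1 + r^2) - e₀)^2
        * (Real.exp (-β₀ * Real.sqrt (1 + r^2)) / Mfun β₀)))
        = V * (Mfun β₀)⁻¹ := by
      rw [hVdef, ← integral_mul_const]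
      apply integral_congr_ae (Filter.Eventually.of_forall fun r => ?_)
      show r^2 * ((uu r - e₀)^2 * (Real.exp (-β₀ * uu r) / Mfun β₀))
        = r^2 * (uu r - e₀)^2 * Real.exp (-β₀ * uu r) * (Mfun β₀)⁻¹
      rw [div_eq_mul_inv]; ring
    rw [hsplit, hMC, hcV, ← hCdef]
    field_simp
  refine ⟨hcpos, hmain, ?_⟩
  have hpt : ∀ q : EuclideanSpace ℝ (Fin 3),
      ((Real.sqrt c)⁻¹ * (Real.sqrt (1 + ‖q‖^2) - e₀)
        * Real.sqrt (Real.exp (-β₀ * Real.sqrt (1 + ‖q‖^2)) / Mfun β₀))^2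
      = c⁻¹ * ((Real.sqrt (1 + ‖q‖^2) - e₀)^2
          * (Real.exp (-β₀ * Real.sqrt (1 + ‖q‖^2)) / Mfun β₀)) := by
    intro q
    rw [mul_pow, mul_pow, inv_pow, Real.sq_sqrt hcpos.le,
      Real.sq_sqrt (div_nonneg (Real.exp_pos _).le hM.le)]
    ring
  rw [integral_congr_ae (Filter.Eventually.of_forall hpt), integral_const_mul, hmain,
    inv_mul_cancel₀ hcpos.ne']
end
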